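/- Let X, Y be finite sets, W : X → Y → ℝ≥0 a channel, and ρ > 0. Define E_0(ρ,P) = −log ∑_y (∑_x P(x)W(y|x)^{1/(1+ρ)})^{1+ρ}. Then lim_{ρ→∞} max_P E_0(ρ,P)/ρ = −log π_0, where π_0 = min_P max_{y∈Y} P(X(y)), X(y) = {x : W(y|x) > 0}, and both extrema are over PMFs P on X. -/

import Mathlib

open Finset Filter

/-- `lim_{ρ→∞} maxₚ E₀(ρ,P)/ρ = −log π₀`, where
`E₀(ρ,P) = −log ∑_y (∑_x P(x)W(y|x)^{1/(1+ρ)})^{1+ρ}`,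
`π₀ = minₚ max_y P(X(y))` and `X(y) = {x : W(y|x) > 0}`,
both extrema taken over PMFs `P` on `X`. -/
theorem tendsto_max_E0_div_rho_neg_log_pi0
    {X Y : Type*} [Fintype X] [Fintype Y] [Nonempty X] [Nonempty Y]
    (W : X → Y → ℝ) (hW0 : ∀ x y, 0 ≤ W x y) (hW1 : ∀ x, ∑ y, W x y = 1) :
    Tendsto (fun ρ : ℝ =>
        sSup {v : ℝ | ∃ P : X → ℝ, (∀ x, 0 ≤ P x) ∧ ∑ x, P x = 1 ∧
          v = (-Real.log (∑ y, (∑ x, P x * (W x y) ^ (1 / (1 + ρ))) ^ (1 + ρ))) / ρ})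
      atTop
      (nhds (-Real.log (sInf {v : ℝ | ∃ P : X → ℝ, (∀ x, 0 ≤ P x) ∧ ∑ x, P x = 1 ∧
          v = ⨆ y, ∑ x ∈ univ.filter (fun x => 0 < W x y), P x}))) := by
  classical
  have hWle1 : ∀ x y, W x y ≤ 1 := by
    intro x y
    calc W x y ≤ ∑ y', W x y' :=
          Finset.single_le_sum (fun y' _ => hW0 x y') (mem_univ y)
      _ = 1 := hW1 x
  -- the least positive entry of W
  set S : Finset (X × Y) := univ.filter (fun p => 0 < W p.1 p.2) with hS
  have hrow : ∀ x : X, ∃ y, 0 < W x y := by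
    intro x
    by_contra h
    push_neg at h
    have h0 : ∑ y, W x y = 0 :=
      Finset.sum_eq_zero (fun y _ => le_antisymm (h y) (hW0 x y))
    rw [hW1 x] at h0; norm_num at h0
  have hSne : S.Nonempty := by
    obtain ⟨x⟩ := ‹Nonempty X›
    obtain ⟨y, hy⟩ := hrow x
    exact ⟨(x, y), by simp [hS, hy]⟩
  set c : ℝ := S.inf' hSne (fun p => W p.1 p.2) with hcdef
  have hc0 : 0 < c := by
    rw [hcdef, Finset.lt_inf'_iff]
    intro p hp
    exact (Finset.mem_filter.1 hp).2
  have hcle : ∀ x y, 0 < W x y → c ≤ W x y := by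
    intro x y h
    exact Finset.inf'_le (b := (x, y)) _ (Finset.mem_filter.2 ⟨mem_univ _, h⟩)
  -- the function f P = max_y P(X(y)) and its Finset.sup' form
  set f : (X → ℝ) → ℝ :=
    fun P => ⨆ y, ∑ x ∈ univ.filter (fun x => 0 < W x y), P x with hfdef
  have hfsup' : ∀ P : X → ℝ,
      f P = (univ : Finset Y).sup' univ_nonempty
        (fun y => ∑ x ∈ univ.filter (fun x => 0 < W x y), P x) := by
    intro P
    rw [hfdef, Finset.sup'_univ_eq_ciSup]
  have hfcont : Continuous f := by
    have hfeq : f = fun P => (univ : Finset Y).sup' univ_nonempty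
        (fun y => ∑ x ∈ univ.filter (fun x => 0 < W x y), P x) := funext hfsup'
    rw [hfeq, continuous_iff_continuousAt]
    intro P
    exact ContinuousAt.finset_sup'_apply univ_nonempty
      (fun y _ => (continuous_finset_sum _
        (fun x _ => continuous_apply x)).continuousAt)
  -- the set T whose infimum is π₀
  set T : Set ℝ := {v : ℝ | ∃ P : X → ℝ, (∀ x, 0 ≤ P x) ∧ ∑ x, P x = 1 ∧ v = f P}
    with hTdef
  have hTim : T = f '' stdSimplex ℝ X := by
    ext v
    constructor
    · rintro ⟨P, h0, h1, rfl⟩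
      exact ⟨P, ⟨h0, h1⟩, rfl⟩
    · rintro ⟨P, ⟨h0, h1⟩, rfl⟩
      exact ⟨P, h0, h1, rfl⟩
  have hTc : IsCompact T := by
    rw [hTim]
    exact (isCompact_stdSimplex ℝ X).image hfcont
  have hTne : T.Nonempty := by
    refine ⟨f (fun _ => (1 : ℝ) / Fintype.card X), fun _ => (1 : ℝ) / Fintype.card X,
      fun x => by positivity, ?_, rfl⟩
    have hcard : (Fintype.card X : ℝ) ≠ 0 := by
      exact_mod_cast Fintype.card_ne_zero
    rw [Finset.sum_const, Finset.card_univ, nsmul_eq_mul]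
    field_simp
  set π0 : ℝ := sInf T with hπ0def
  obtain ⟨Pm, hPm0, hPm1, hPmv⟩ : π0 ∈ T := hTc.sInf_mem hTne
  have hπ0le : ∀ P : X → ℝ, (∀ x, 0 ≤ P x) → ∑ x, P x = 1 → π0 ≤ f P := by
    intro P h0 h1
    exact csInf_le hTc.bddBelow ⟨P, h0, h1, rfl⟩
  -- f P ≥ 1/|Y| on the simplex, so π₀ > 0
  have hf_lb : ∀ P : X → ℝ, (∀ x, 0 ≤ P x) → ∑ x, P x = 1 →
      (1 : ℝ) / Fintype.card Y ≤ f P := by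
    intro P h0 h1
    have hsum : (1 : ℝ) ≤ ∑ y, ∑ x ∈ univ.filter (fun x => 0 < W x y), P x := by
      have hfil : ∀ y : Y, ∑ x ∈ univ.filter (fun x => 0 < W x y), P x
          = ∑ x, if 0 < W x y then P x else 0 := by
        intro y; rw [Finset.sum_filter]
      simp only [hfil]
      rw [Finset.sum_comm, ← h1]
      refine Finset.sum_le_sum ?_
      intro x _
      obtain ⟨y0, hy0⟩ := hrow x
      have := Finset.single_le_sum
        (f := fun y => if 0 < W x y then P x else 0)
        (fun y _ => by split_ifs; exacts [h0 x, le_rfl]) (mem_univ y0)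
      simpa [hy0] using this
    have hcardY : (0 : ℝ) < Fintype.card Y := by
      exact_mod_cast Fintype.card_pos
    have hconst : ∑ _y : Y, (1 : ℝ) / Fintype.card Y = 1 := by
      rw [Finset.sum_const, Finset.card_univ, nsmul_eq_mul]
      field_simp
    have hle : ∑ _y : Y, (1 : ℝ) / Fintype.card Y
        ≤ ∑ y, ∑ x ∈ univ.filter (fun x => 0 < W x y), P x := by
      rw [hconst]; exact hsum
    obtain ⟨y, _, hy⟩ := Finset.exists_le_of_sum_le univ_nonempty hle
    calc (1 : ℝ) / Fintype.card Y
        ≤ ∑ x ∈ univ.filter (fun x => 0 < W x y), P x := hy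
      _ ≤ f P := by
          rw [hfsup' P]
          exact Finset.le_sup'
            (fun y => ∑ x ∈ univ.filter (fun x => 0 < W x y), P x) (mem_univ y)
  have hπ0pos : 0 < π0 := by
    have h1 : (0 : ℝ) < 1 / Fintype.card Y := by
      have : (0 : ℝ) < Fintype.card Y := by exact_mod_cast Fintype.card_pos
      positivity
    have h2 := hf_lb Pm hPm0 hPm1
    rw [← hPmv] at h2
    linarith
  -- main estimates for fixed ρ > 0
  have key : ∀ ρ : ℝ, 0 < ρ → ∀ P : X → ℝ, (∀ x, 0 ≤ P x) → ∑ x, P x = 1 →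
      c * π0 ^ (1 + ρ) ≤ ∑ y, (∑ x, P x * (W x y) ^ (1 / (1 + ρ))) ^ (1 + ρ) ∧
      ∑ y, (∑ x, P x * (W x y) ^ (1 / (1 + ρ))) ^ (1 + ρ)
        ≤ (Fintype.card Y : ℝ) * (f P) ^ (1 + ρ) := by
    intro ρ hρ P h0 h1
    have hρ1 : (0 : ℝ) < 1 + ρ := by linarith
    set s : ℝ := 1 / (1 + ρ) with hsdef
    have hs0 : 0 < s := by positivity
    have hrestr : ∀ y : Y, ∑ x, P x * (W x y) ^ s
        = ∑ x ∈ univ.filter (fun x => 0 < W x y), P x * (W x y) ^ s := by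
      intro y
      refine (Finset.sum_subset (Finset.filter_subset _ _) ?_).symm
      intro x _ hx
      have hW : W x y = 0 := by
        by_contra h
        exact hx (Finset.mem_filter.2 ⟨mem_univ x,
          lt_of_le_of_ne (hW0 x y) (Ne.symm h)⟩)
      rw [hW, Real.zero_rpow (ne_of_gt hs0), mul_zero]
    have hA0 : ∀ y : Y, 0 ≤ ∑ x, P x * (W x y) ^ s := fun y =>
      Finset.sum_nonneg fun x _ => mul_nonneg (h0 x) (Real.rpow_nonneg (hW0 x y) s)
    have hAub : ∀ y : Y, ∑ x, P x * (W x y) ^ s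
        ≤ ∑ x ∈ univ.filter (fun x => 0 < W x y), P x := by
      intro y
      rw [hrestr y]
      refine Finset.sum_le_sum ?_
      intro x hx
      calc P x * (W x y) ^ s ≤ P x * 1 := by
            refine mul_le_mul_of_nonneg_left ?_ (h0 x)
            exact Real.rpow_le_one (hW0 x y) (hWle1 x y) hs0.le
        _ = P x := mul_one _
    have hAlb : ∀ y : Y, c ^ s * (∑ x ∈ univ.filter (fun x => 0 < W x y), P x)
        ≤ ∑ x, P x * (W x y) ^ s := by
      intro y
      rw [hrestr y, Finset.mul_sum]
      refine Finset.sum_le_sum ?_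
      intro x hx
      have hWx := (Finset.mem_filter.1 hx).2
      rw [mul_comm (c ^ s)]
      exact mul_le_mul_of_nonneg_left
        (Real.rpow_le_rpow hc0.le (hcle x y hWx) hs0.le) (h0 x)
    have hinner_le : ∀ y : Y, ∑ x ∈ univ.filter (fun x => 0 < W x y), P x ≤ f P := by
      intro y; rw [hfsup' P]
      exact Finset.le_sup'
        (fun y => ∑ x ∈ univ.filter (fun x => 0 < W x y), P x) (mem_univ y)
    constructor
    · -- lower bound on Z
      obtain ⟨y0, _, hy0⟩ := Finset.exists_mem_eq_sup' (univ_nonempty)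
        (fun y => ∑ x ∈ univ.filter (fun x => 0 < W x y), P x)
      have hfPy0 : f P = ∑ x ∈ univ.filter (fun x => 0 < W x y0), P x := by
        rw [hfsup' P]; exact hy0
      have h1le : c ^ s * π0 ≤ ∑ x, P x * (W x y0) ^ s := by
        calc c ^ s * π0 ≤ c ^ s * f P :=
              mul_le_mul_of_nonneg_left (hπ0le P h0 h1) (Real.rpow_nonneg hc0.le s)
          _ = c ^ s * ∑ x ∈ univ.filter (fun x => 0 < W x y0), P x := by rw [hfPy0]
          _ ≤ _ := hAlb y0
      have hbase0 : 0 ≤ c ^ s * π0 := mul_nonneg (Real.rpow_nonneg hc0.le s) hπ0pos.le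
      have hsone : s * (1 + ρ) = 1 := by
        rw [hsdef]; exact one_div_mul_cancel hρ1.ne'
      have hcs : (c ^ s) ^ (1 + ρ) = c := by
        rw [← Real.rpow_mul hc0.le, hsone, Real.rpow_one]
      calc c * π0 ^ (1 + ρ) = (c ^ s * π0) ^ (1 + ρ) := by
            rw [Real.mul_rpow (Real.rpow_nonneg hc0.le s) hπ0pos.le, hcs]
        _ ≤ (∑ x, P x * (W x y0) ^ s) ^ (1 + ρ) :=
            Real.rpow_le_rpow hbase0 h1le hρ1.le
        _ ≤ ∑ y, (∑ x, P x * (W x y) ^ s) ^ (1 + ρ) :=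
            Finset.single_le_sum
              (fun y _ => Real.rpow_nonneg (hA0 y) _) (mem_univ y0)
    · -- upper bound on Z
      calc ∑ y, (∑ x, P x * (W x y) ^ s) ^ (1 + ρ)
          ≤ ∑ _y : Y, (f P) ^ (1 + ρ) := by
            refine Finset.sum_le_sum ?_
            intro y _
            exact Real.rpow_le_rpow (hA0 y) ((hAub y).trans (hinner_le y)) hρ1.le
        _ = (Fintype.card Y : ℝ) * (f P) ^ (1 + ρ) := by
            rw [Finset.sum_const, Finset.card_univ, nsmul_eq_mul]
  -- upper bound on each element of the sup set
  have hub : ∀ ρ : ℝ, 0 < ρ → ∀ P : X → ℝ, (∀ x, 0 ≤ P x) → ∑ x, P x = 1 →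
      (-Real.log (∑ y, (∑ x, P x * (W x y) ^ (1 / (1 + ρ))) ^ (1 + ρ))) / ρ
        ≤ (-Real.log c - (1 + ρ) * Real.log π0) / ρ := by
    intro ρ hρ P h0 h1
    obtain ⟨hZlb, -⟩ := key ρ hρ P h0 h1
    have hb : 0 < c * π0 ^ (1 + ρ) := mul_pos hc0 (Real.rpow_pos_of_pos hπ0pos _)
    have hlog : Real.log c + (1 + ρ) * Real.log π0
        ≤ Real.log (∑ y, (∑ x, P x * (W x y) ^ (1 / (1 + ρ))) ^ (1 + ρ)) := by
      have h2 := Real.log_le_log hb hZlb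
      rwa [Real.log_mul hc0.ne' (Real.rpow_pos_of_pos hπ0pos _).ne',
        Real.log_rpow hπ0pos] at h2
    exact (div_le_div_iff_of_pos_right hρ).mpr (by linarith)
  -- lower bound via the minimizing distribution Pm
  have hlb : ∀ ρ : ℝ, 0 < ρ →
      (-Real.log (Fintype.card Y : ℝ) - (1 + ρ) * Real.log π0) / ρ
        ≤ (-Real.log (∑ y, (∑ x, Pm x * (W x y) ^ (1 / (1 + ρ))) ^ (1 + ρ))) / ρ := by
    intro ρ hρ
    obtain ⟨hZlb, hZub⟩ := key ρ hρ Pm hPm0 hPm1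
    rw [← hPmv] at hZub
    have hZpos : 0 < ∑ y, (∑ x, Pm x * (W x y) ^ (1 / (1 + ρ))) ^ (1 + ρ) :=
      lt_of_lt_of_le (mul_pos hc0 (Real.rpow_pos_of_pos hπ0pos _)) hZlb
    have hcardY : (0 : ℝ) < Fintype.card Y := by
      exact_mod_cast Fintype.card_pos
    have hlog : Real.log (∑ y, (∑ x, Pm x * (W x y) ^ (1 / (1 + ρ))) ^ (1 + ρ))
        ≤ Real.log (Fintype.card Y : ℝ) + (1 + ρ) * Real.log π0 := by
      have h2 := Real.log_le_log hZpos hZub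
      rwa [Real.log_mul hcardY.ne' (Real.rpow_pos_of_pos hπ0pos _).ne',
        Real.log_rpow hπ0pos] at h2
    exact (div_le_div_iff_of_pos_right hρ).mpr (by linarith)
  -- limits of the bounding functions
  have haux : ∀ a b : ℝ, Tendsto (fun ρ : ℝ => (a - (1 + ρ) * b) / ρ) atTop (nhds (-b)) := by
    intro a b
    have h1 : Tendsto (fun ρ : ℝ => (a - b) / ρ + -b) atTop (nhds (-b)) := by
      have h2 : Tendsto (fun ρ : ℝ => (a - b) / ρ) atTop (nhds 0) :=
        tendsto_const_nhds.div_atTop tendsto_id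
      simpa using h2.add tendsto_const_nhds
    refine h1.congr' ?_
    filter_upwards [eventually_gt_atTop (0 : ℝ)] with ρ hρ
    field_simp
    ring
  -- squeeze
  have hgoal : Tendsto (fun ρ : ℝ =>
      sSup {v : ℝ | ∃ P : X → ℝ, (∀ x, 0 ≤ P x) ∧ ∑ x, P x = 1 ∧
        v = (-Real.log (∑ y, (∑ x, P x * (W x y) ^ (1 / (1 + ρ))) ^ (1 + ρ))) / ρ})
      atTop (nhds (-Real.log π0)) := by
    refine tendsto_of_tendsto_of_tendsto_of_le_of_le'
      (haux (-Real.log (Fintype.card Y : ℝ)) (Real.log π0))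
      (haux (-Real.log c) (Real.log π0)) ?_ ?_
    · filter_upwards [eventually_gt_atTop (0 : ℝ)] with ρ hρ
      refine le_trans (hlb ρ hρ) ?_
      refine le_csSup ⟨(-Real.log c - (1 + ρ) * Real.log π0) / ρ, ?_⟩
        ⟨Pm, hPm0, hPm1, rfl⟩
      rintro v ⟨P, h0, h1, rfl⟩
      exact hub ρ hρ P h0 h1
    · filter_upwards [eventually_gt_atTop (0 : ℝ)] with ρ hρ
      refine csSup_le ⟨_, Pm, hPm0, hPm1, rfl⟩ ?_
      rintro v ⟨P, h0, h1, rfl⟩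
      exact hub ρ hρ P h0 h1
  exact hgoal
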